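/- arXiv:2005.09281 — 5 statements merged into one kernel-verified Lean document; each statement's English description precedes it below -/
import Mathlib

section
/- Let μ be a weight measure over a finite alphabet Σ with values in a linearly ordered cancellative commutative monoid A. There exists a word w ∈ Σ* with P_μ(w) = ∅ if and only if μ is gapful (i.e. not gapfree). -/
/-- The weight of a word: the product of the weights of its letters. -/
def weight {α A : Type*} [CommMonoid A] [LinearOrder A] [IsOrderedCancelMonoid A] (μ : α → A) (w : List α) : A :=
  (w.map μ).prod

/-- The factor-weight function: `factorWeight μ w i` is the maximum weight of a
length-`i` factor (contiguous subword) of `w`. -/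
def factorWeight {α A : Type*} [CommMonoid A] [LinearOrder A] [IsOrderedCancelMonoid A] (μ : α → A)
    (w : List α) (i : ℕ) : A :=
  ((List.range (w.length + 1 - i)).map fun j => weight μ ((w.drop j).take i)).foldr max 1

/-- A word is `μ`-prefix normal if its factor-weight function agrees with its
prefix-weight function. -/
def PrefixNormal {α A : Type*} [CommMonoid A] [LinearOrder A] [IsOrderedCancelMonoid A] (μ : α → A)
    (w : List α) : Prop :=
  ∀ i ≤ w.length, factorWeight μ w i = weight μ (w.take i)

/-- A weight measure is gapfree if for every word `w` and every `1 ≤ i ≤ |w|` there is a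
letter `a` with `f_{w,μ}(i) = f_{w,μ}(i-1) * μ a`. -/
def Gapfree {α A : Type*} [CommMonoid A] [LinearOrder A] [IsOrderedCancelMonoid A] (μ : α → A) : Prop :=
  ∀ w : List α, ∀ i, 1 ≤ i → i ≤ w.length →
    ∃ a : α, factorWeight μ w i = factorWeight μ w (i - 1) * μ a

/-- `pnClass μ w` is the set `P_μ(w)` of words that are factor-weight equivalent to `w`
and `μ`-prefix normal. -/
def pnClass {α A : Type*} [CommMonoid A] [LinearOrder A] [IsOrderedCancelMonoid A] (μ : α → A)
    (w : List α) : Set (List α) :=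
  {v | (∀ i, factorWeight μ v i = factorWeight μ w i) ∧ PrefixNormal μ v}

section Aux

variable {A : Type*} [LinearOrder A]

lemma foldr_max_le {l : List A} {b c : A} (hb : b ≤ c) (h : ∀ x ∈ l, x ≤ c) :
    l.foldr max b ≤ c := by
  induction l with
  | nil => simpa using hb
  | cons a l ih =>
    simp only [List.foldr_cons]
    exact max_le (h a (by simp)) (ih fun x hx => h x (List.mem_cons_of_mem _ hx))

lemma le_foldr_max {l : List A} {b a : A} (h : a ∈ l) : a ≤ l.foldr max b := by
  induction l with
  | nil => simp at h
  | cons x l ih =>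
    simp only [List.foldr_cons]
    rcases List.mem_cons.mp h with h | h
    · exact h ▸ le_max_left _ _
    · exact (ih h).trans (le_max_right _ _)

lemma base_le_foldr_max (l : List A) (b : A) : b ≤ l.foldr max b := by
  induction l with
  | nil => simp
  | cons x l ih => exact ih.trans (by simp only [List.foldr_cons]; exact le_max_right _ _)

lemma foldr_max_mem (l : List A) (b : A) : l.foldr max b = b ∨ l.foldr max b ∈ l := by
  induction l with
  | nil => simp
  | cons x l ih =>
    simp only [List.foldr_cons]
    rcases max_choice x (l.foldr max b) with h | h
    · right; simp [h]
    · rcases ih with h' | h'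
      · left; rw [h, h']
      · right; rw [h]; exact List.mem_cons_of_mem _ h'

end Aux

section WeightLemmas

variable {α A : Type*} [CommMonoid A] [LinearOrder A] [IsOrderedCancelMonoid A] {μ : α → A}

lemma weight_nil : weight μ [] = 1 := by simp [weight]

lemma weight_append (u v : List α) : weight μ (u ++ v) = weight μ u * weight μ v := by
  simp [weight]

lemma one_le_weight (hμ : ∀ a : α, 1 < μ a) (u : List α) : 1 ≤ weight μ u :=
  List.one_le_prod_of_one_le (by
    intro x hx
    obtain ⟨a, _, rfl⟩ := List.mem_map.mp hx
    exact (hμ a).le)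

lemma one_lt_weight (hμ : ∀ a : α, 1 < μ a) {u : List α} (hu : u ≠ []) :
    1 < weight μ u := by
  cases u with
  | nil => exact absurd rfl hu
  | cons a t =>
    have : weight μ (a :: t) = μ a * weight μ t := by simp [weight]
    rw [this]
    calc (1 : A) < μ a := hμ a
    _ ≤ μ a * weight μ t := le_mul_of_one_le_right' (one_le_weight hμ t)

lemma factorWeight_zero (w : List α) : factorWeight μ w 0 = 1 := by
  apply le_antisymm
  · apply foldr_max_le le_rfl
    intro x hx
    obtain ⟨j, _, rfl⟩ := List.mem_map.mp hx
    simp [weight]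
  · exact base_le_foldr_max _ _

lemma factorWeight_of_gt {w : List α} {i : ℕ} (h : w.length < i) :
    factorWeight μ w i = 1 := by
  have : w.length + 1 - i = 0 := by omega
  simp [factorWeight, this]

lemma weight_factor_le {w : List α} {i j : ℕ} (h : j + i ≤ w.length) :
    weight μ ((w.drop j).take i) ≤ factorWeight μ w i := by
  apply le_foldr_max
  exact List.mem_map.mpr ⟨j, List.mem_range.mpr (by omega), rfl⟩

lemma factorWeight_le {w : List α} {i : ℕ} {c : A} (hc : 1 ≤ c)
    (h : ∀ j, j + i ≤ w.length → weight μ ((w.drop j).take i) ≤ c) :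
    factorWeight μ w i ≤ c := by
  apply foldr_max_le hc
  intro x hx
  obtain ⟨j, hj, rfl⟩ := List.mem_map.mp hx
  exact h j (by have := List.mem_range.mp hj; omega)

lemma exists_factorWeight (hμ : ∀ a : α, 1 < μ a) {w : List α} {i : ℕ} (hi : i ≤ w.length) :
    ∃ j, j + i ≤ w.length ∧ factorWeight μ w i = weight μ ((w.drop j).take i) := by
  rcases foldr_max_mem ((List.range (w.length + 1 - i)).map
      fun j => weight μ ((w.drop j).take i)) 1 with h | h
  · refine ⟨0, by omega, ?_⟩
    have h1 : weight μ ((w.drop 0).take i) ≤ factorWeight μ w i :=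
      weight_factor_le (by omega)
    have h2 : 1 ≤ weight μ ((w.drop 0).take i) := one_le_weight hμ _
    have hfw : factorWeight μ w i = 1 := h
    rw [hfw]
    exact (le_antisymm (hfw ▸ h1) h2).symm
  · obtain ⟨j, hj, hje⟩ := List.mem_map.mp h
    exact ⟨j, by have := List.mem_range.mp hj; omega, hje.symm⟩

lemma one_lt_factorWeight (hμ : ∀ a : α, 1 < μ a) {w : List α} {i : ℕ}
    (h1 : 1 ≤ i) (h2 : i ≤ w.length) : 1 < factorWeight μ w i := by
  have hne : w.take i ≠ [] := by
    have hl : (w.take i).length = i := by rw [List.length_take]; omega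
    intro h
    rw [h] at hl
    simp at hl
    omega
  calc (1 : A) < weight μ (w.take i) := one_lt_weight hμ hne
  _ = weight μ ((w.drop 0).take i) := by rw [List.drop_zero]
  _ ≤ factorWeight μ w i := weight_factor_le (by omega)

lemma factorWeight_submul (hμ : ∀ a : α, 1 < μ a) {w : List α} {i j : ℕ}
    (h : i + j ≤ w.length) :
    factorWeight μ w (i + j) ≤ factorWeight μ w i * factorWeight μ w j := by
  obtain ⟨k, hk, he⟩ := exists_factorWeight hμ h
  rw [he]
  have hsplit : (w.drop k).take (i + j) =
      (w.drop k).take i ++ ((w.drop (k + i)).take j) := by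
    rw [List.take_add, List.drop_drop]
  rw [hsplit, weight_append]
  exact mul_le_mul' (weight_factor_le (by omega)) (weight_factor_le (by omega))

lemma one_le_factorWeight (hμ : ∀ a : α, 1 < μ a) (w : List α) {i : ℕ}
    (hi : i ≤ w.length) : 1 ≤ factorWeight μ w i := by
  calc (1 : A) ≤ weight μ ((w.drop 0).take i) := one_le_weight hμ _
  _ ≤ factorWeight μ w i := weight_factor_le (by omega)

/-- If `μ` is gapfree, every class `P_μ(w)` is nonempty. -/
lemma pnClass_nonempty (hμ : ∀ a : α, 1 < μ a) (hg : Gapfree μ) (w : List α) :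
    (pnClass μ w).Nonempty := by
  set n := w.length with hn
  rcases Nat.eq_zero_or_pos n with h0 | hpos
  · -- w = []
    have hw : w = [] := List.eq_nil_of_length_eq_zero (by omega)
    subst hw
    refine ⟨[], fun i => rfl, ?_⟩
    intro i hi
    simp only [List.length_nil, Nat.le_zero] at hi
    subst hi
    simp [factorWeight_zero, weight_nil]
  · haveI : Inhabited α := ⟨w.get ⟨0, hpos⟩⟩
    -- choose letters
    have hch : ∀ i, i < n → ∃ a : α,
        factorWeight μ w (i + 1) = factorWeight μ w i * μ a := by
      intro i hi
      obtain ⟨a, ha⟩ := hg w (i + 1) (by omega) (by omega)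
      exact ⟨a, by simpa using ha⟩
    classical
    set g : ℕ → α := fun i => if h : i < n then (hch i h).choose else default with hgdef
    have hgs : ∀ i, i < n → factorWeight μ w (i + 1) = factorWeight μ w i * μ (g i) := by
      intro i hi
      simp only [hgdef, dif_pos hi]
      exact (hch i hi).choose_spec
    set v : List α := (List.range n).map g with hvdef
    have hvlen : v.length = n := by simp [hvdef]
    have htake : ∀ k, k ≤ n → v.take k = (List.range k).map g := by
      intro k hk
      rw [hvdef, ← List.map_take, List.take_range, Nat.min_eq_left hk]
    have hpw : ∀ k, k ≤ n → weight μ (v.take k) = factorWeight μ w k := by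
      intro k
      induction k with
      | zero => intro _; simp [factorWeight_zero, weight_nil]
      | succ k ih =>
        intro hk
        rw [htake (k + 1) hk, List.range_succ, List.map_append, weight_append,
          ← htake k (by omega), ih (by omega)]
        simp only [List.map_cons, List.map_nil]
        rw [show weight μ [g k] = μ (g k) by simp [weight]]
        exact (hgs k (by omega)).symm
    have hfv : ∀ i, factorWeight μ v i = factorWeight μ w i := by
      intro i
      rcases le_or_gt i n with hi | hi
      · apply le_antisymm
        · apply factorWeight_le (one_le_factorWeight hμ w hi)
          intro j hj
          rw [hvlen] at hj
          have hsplit : weight μ (v.take j) * weight μ ((v.drop j).take i) =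
              weight μ (v.take (j + i)) := by
            rw [List.take_add, weight_append]
          have h1 : weight μ (v.take (j + i)) = factorWeight μ w (j + i) :=
            hpw (j + i) hj
          have h2 : weight μ (v.take j) = factorWeight μ w j := hpw j (by omega)
          have h3 : factorWeight μ w (j + i) ≤ factorWeight μ w j * factorWeight μ w i :=
            factorWeight_submul hμ hj
          apply le_of_mul_le_mul_left' (a := factorWeight μ w j)
          calc factorWeight μ w j * weight μ ((v.drop j).take i)
              = weight μ (v.take j) * weight μ ((v.drop j).take i) := by rw [h2]
            _ = weight μ (v.take (j + i)) := hsplit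
            _ = factorWeight μ w (j + i) := h1
            _ ≤ factorWeight μ w j * factorWeight μ w i := h3
        · calc factorWeight μ w i = weight μ (v.take i) := (hpw i hi).symm
            _ = weight μ ((v.drop 0).take i) := by simp
            _ ≤ factorWeight μ v i := weight_factor_le (by omega)
      · rw [factorWeight_of_gt (show v.length < i by omega),
          factorWeight_of_gt (show w.length < i by omega)]
    refine ⟨v, hfv, ?_⟩
    intro i hi
    rw [hvlen] at hi
    rw [hfv i, hpw i hi]

end WeightLemmas

/-- There is a word `w` with `P_μ(w) = ∅` iff `μ` is gapful (not gapfree). -/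
theorem exists_empty_pnClass_iff_not_gapfree {α A : Type*} [Fintype α]
    [CommMonoid A] [LinearOrder A] [IsOrderedCancelMonoid A] (μ : α → A) (hμ : ∀ a : α, 1 < μ a) :
    (∃ w : List α, pnClass μ w = ∅) ↔ ¬ Gapfree μ := by
  constructor
  · rintro ⟨w, hw⟩ hg
    obtain ⟨v, hv⟩ := pnClass_nonempty hμ hg w
    rw [hw] at hv
    exact hv
  · intro hg
    unfold Gapfree at hg
    push_neg at hg
    obtain ⟨w, i, h1, h2, hno⟩ := hg
    refine ⟨w, Set.eq_empty_iff_forall_notMem.mpr ?_⟩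
    rintro v ⟨hfv, hpn⟩
    have h3 : 1 < factorWeight μ w i := one_lt_factorWeight hμ h1 h2
    have h4 : i ≤ v.length := by
      by_contra h
      push_neg at h
      have := factorWeight_of_gt (μ := μ) h
      rw [hfv i] at this
      exact absurd this h3.ne'
    have hlt : i - 1 < v.length := by omega
    apply hno (v.get ⟨i - 1, hlt⟩)
    have hconcat : v.take (i - 1) ++ [v.get ⟨i - 1, hlt⟩] = v.take i := by
      have := List.take_concat_get hlt
      simp only [List.concat_eq_append, Nat.sub_add_cancel h1] at this
      exact this
    calc factorWeight μ w i = factorWeight μ v i := (hfv i).symm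
      _ = weight μ (v.take i) := hpn i h4
      _ = weight μ (v.take (i - 1)) * μ (v.get ⟨i - 1, hlt⟩) := by
          rw [← hconcat, weight_append]; simp [weight]
      _ = factorWeight μ v (i - 1) * μ (v.get ⟨i - 1, hlt⟩) := by
          rw [hpn (i - 1) (by omega)]
      _ = factorWeight μ w (i - 1) * μ (v.get ⟨i - 1, hlt⟩) := by rw [hfv (i - 1)]
end

section
/- Every binary weight measure is gapfree: if μ is a weight measure over a finite alphabet Σ whose set of base weights μ(Σ) has exactly two elements, then μ is gapfree. -/
namespace BWG
variable {A : Type*} [LinearOrder A]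

lemma le_foldr_max {l : List A} (d : A) {a : A} (h : a ∈ l) : a ≤ l.foldr max d := by
  induction l with
  | nil => cases h
  | cons b t ih =>
    rcases List.mem_cons.1 h with rfl | h
    · exact le_max_left _ _
    · exact (ih h).trans (le_max_right _ _)

lemma foldr_max_le {l : List A} {d m : A} (hd : d ≤ m) (h : ∀ a ∈ l, a ≤ m) :
    l.foldr max d ≤ m := by
  induction l with
  | nil => exact hd
  | cons b t ih =>
    exact max_le (h b (.head _)) (ih fun a ha => h a (.tail _ ha))

lemma foldr_max_mem {l : List A} {d : A} (hne : l ≠ []) (h : ∀ a ∈ l, d ≤ a) :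
    l.foldr max d ∈ l := by
  induction l with
  | nil => simp at hne
  | cons b t ih =>
    cases t with
    | nil => simpa using max_eq_left (h b (by simp))
    | cons c s =>
      rcases max_choice b ((c::s).foldr max d) with h1 | h1
      · simp only [List.foldr] at h1 ⊢
        rw [h1]
        exact List.mem_cons_self
      · simp only [List.foldr] at h1 ⊢
        rw [h1]
        exact List.mem_cons_of_mem _ (ih (by simp) fun a ha => h a (.tail _ ha))

end BWG

/-- Every binary weight measure (one whose set of base weights has exactly two
elements) is gapfree. -/
theorem binary_weightMeasure_gapfree {α A : Type*} [Fintype α] [DecidableEq A]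
    [CommMonoid A] [LinearOrder A] [IsOrderedCancelMonoid A] (μ : α → A) (hμ : ∀ a : α, 1 < μ a)
    (hbin : (Finset.univ.image μ).card = 2) :
    Gapfree μ := by
  have key : ∀ x y : A, x < y → (Finset.univ.image μ) = {x, y} → Gapfree μ := by
    intro x y hxy hset w i hi1 hin
    -- basic facts about x, y
    have hmem : ∀ a : α, μ a = x ∨ μ a = y := by
      intro a
      have : μ a ∈ ({x, y} : Finset A) := hset ▸ Finset.mem_image_of_mem μ (Finset.mem_univ a)
      simpa using this
    have hxa : ∃ a : α, μ a = x := by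
      have : x ∈ Finset.univ.image μ := by rw [hset]; simp
      simpa using this
    have hya : ∃ a : α, μ a = y := by
      have : y ∈ Finset.univ.image μ := by rw [hset]; simp
      simpa using this
    -- the count of heavy letters
    set cnt : List α → ℕ := fun v => v.countP (fun a => decide (μ a = y)) with hcnt_def
    have hcle : ∀ v : List α, cnt v ≤ v.length := fun v => v.countP_le_length
    have hcnt_append : ∀ u v : List α, cnt (u ++ v) = cnt u + cnt v := by
      intro u v; simp [hcnt_def, List.countP_append]
    -- weight formula
    have hwt : ∀ v : List α, weight μ v = x ^ (v.length - cnt v) * y ^ cnt v := by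
      intro v
      induction v with
      | nil => simp [weight, hcnt_def]
      | cons a t ih =>
        have hw : weight μ (a :: t) = μ a * weight μ t := by simp [weight]
        rcases hmem a with ha | ha
        · have hc : cnt (a :: t) = cnt t := by
            simp [hcnt_def, List.countP_cons, ha, hxy.ne]
          have hl : (a :: t).length - cnt t = (t.length - cnt t) + 1 := by
            have := hcle t; simp only [List.length_cons]; omega
          rw [hw, ih, ha, hc, hl, pow_succ, ← mul_assoc, mul_comm x]
        · have hc : cnt (a :: t) = cnt t + 1 := by
            simp [hcnt_def, List.countP_cons, ha]
          have hl : (a :: t).length - (cnt t + 1) = t.length - cnt t := by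
            simp only [List.length_cons]; omega
          rw [hw, ih, ha, hc, hl, pow_succ, mul_comm y, mul_assoc]
    have h1w : ∀ v : List α, (1 : A) ≤ weight μ v := by
      intro v
      induction v with
      | nil => simp [weight]
      | cons a t ih =>
        have : weight μ (a :: t) = μ a * weight μ t := by simp [weight]
        rw [this]
        exact one_le_mul (hμ a).le ih
    -- monotonicity of x^(n-j) y^j in j
    have hmono : ∀ n j k : ℕ, j ≤ k → k ≤ n →
        x ^ (n - j) * y ^ j ≤ x ^ (n - k) * y ^ k := by
      intro n j k hjk hkn
      have h1 : n - j = (n - k) + (k - j) := by omega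
      have h2 : (k - j) + j = k := by omega
      calc x ^ (n - j) * y ^ j = x ^ (n - k) * (x ^ (k - j) * y ^ j) := by
            rw [h1, pow_add, mul_assoc]
        _ ≤ x ^ (n - k) * (y ^ (k - j) * y ^ j) :=
            mul_le_mul_right (mul_le_mul_left (pow_le_pow_left' hxy.le _) _) _
        _ = x ^ (n - k) * y ^ k := by rw [← pow_add, h2]
    -- the maximum window count
    set n := w.length with hn
    set C : ℕ → ℕ := fun m =>
      ((List.range (n + 1 - m)).map fun j => cnt ((w.drop j).take m)).foldr max 0 with hC_def
    have hwinlen : ∀ m, m ≤ n → ∀ j ∈ List.range (n + 1 - m),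
        ((w.drop j).take m).length = m := by
      intro m hm j hj
      simp only [List.mem_range] at hj
      simp only [List.length_take, List.length_drop]
      omega
    have hCmem : ∀ m, m ≤ n → ∃ j ∈ List.range (n + 1 - m),
        cnt ((w.drop j).take m) = C m := by
      intro m hm
      have hne : ((List.range (n + 1 - m)).map fun j => cnt ((w.drop j).take m)) ≠ [] := by
        simp only [ne_eq, List.map_eq_nil_iff, List.range_eq_nil]
        omega
      have := BWG.foldr_max_mem hne (fun a _ => Nat.zero_le a)
      rw [List.mem_map] at this
      obtain ⟨j, hj, hje⟩ := this
      exact ⟨j, hj, hje⟩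
    have hCle : ∀ m, m ≤ n → C m ≤ m := by
      intro m hm
      apply BWG.foldr_max_le (Nat.zero_le m)
      intro c hc
      rw [List.mem_map] at hc
      obtain ⟨j, hj, rfl⟩ := hc
      calc cnt ((w.drop j).take m) ≤ ((w.drop j).take m).length := hcle _
        _ = m := hwinlen m hm j hj
    -- factorWeight in terms of C
    have hfwm : ∀ m, m ≤ n → factorWeight μ w m = x ^ (m - C m) * y ^ (C m) := by
      intro m hm
      have hne : ((List.range (n + 1 - m)).map fun j => weight μ ((w.drop j).take m)) ≠ [] := by
        simp only [ne_eq, List.map_eq_nil_iff, List.range_eq_nil]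
        omega
      have hmemf := BWG.foldr_max_mem (d := 1) hne (by
        intro a ha
        rw [List.mem_map] at ha
        obtain ⟨j, hj, rfl⟩ := ha
        exact h1w _)
      rw [List.mem_map] at hmemf
      obtain ⟨j1, hj1, hje⟩ := hmemf
      obtain ⟨j0, hj0, hj0e⟩ := hCmem m hm
      unfold factorWeight
      rw [← hn]
      apply le_antisymm
      · rw [← hje, hwt, hwinlen m hm j1 hj1]
        have hc1 : cnt ((w.drop j1).take m) ≤ C m := by
          apply BWG.le_foldr_max
          exact List.mem_map.2 ⟨j1, hj1, rfl⟩
        exact hmono m _ _ hc1 (hCle m hm)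
      · have : x ^ (m - C m) * y ^ (C m) = weight μ ((w.drop j0).take m) := by
          rw [hwt, hwinlen m hm j0 hj0, hj0e]
        rw [this]
        apply BWG.le_foldr_max
        exact List.mem_map.2 ⟨j0, hj0, rfl⟩
    -- window splitting
    have hsplit : ∀ j m, 1 ≤ m →
        cnt ((w.drop j).take (m - 1)) ≤ cnt ((w.drop j).take m) ∧
        cnt ((w.drop j).take m) ≤ cnt ((w.drop j).take (m - 1)) + 1 := by
      intro j m hm
      have hsp : (w.drop j).take m = (w.drop j).take (m - 1) ++ ((w.drop j).drop (m - 1)).take 1 := by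
        rw [← List.take_add]
        congr 1
        omega
      have hextra : cnt (((w.drop j).drop (m - 1)).take 1) ≤ 1 := by
        calc cnt (((w.drop j).drop (m - 1)).take 1) ≤ (((w.drop j).drop (m - 1)).take 1).length :=
              hcle _
          _ ≤ 1 := by simpa using List.length_take_le 1 _
      rw [hsp, hcnt_append]
      omega
    -- C steps
    have hstep2 : C i ≤ C (i - 1) + 1 := by
      apply BWG.foldr_max_le (Nat.zero_le _)
      intro c hc
      rw [List.mem_map] at hc
      obtain ⟨j, hj, rfl⟩ := hc
      have hj' : j ∈ List.range (n + 1 - (i - 1)) := by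
        simp only [List.mem_range] at hj ⊢
        omega
      have hle : cnt ((w.drop j).take (i - 1)) ≤ C (i - 1) := by
        apply BWG.le_foldr_max
        exact List.mem_map.2 ⟨j, hj', rfl⟩
      have := (hsplit j i hi1).2
      omega
    have hstep1 : C (i - 1) ≤ C i := by
      obtain ⟨j, hj, hje⟩ := hCmem (i - 1) (by omega)
      simp only [List.mem_range] at hj
      rcases le_or_gt j (n - i) with hcase | hcase
      · have hj' : j ∈ List.range (n + 1 - i) := by
          simp only [List.mem_range]; omega
        have h1 : cnt ((w.drop j).take (i - 1)) ≤ cnt ((w.drop j).take i) := (hsplit j i hi1).1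
        have h2 : cnt ((w.drop j).take i) ≤ C i := by
          apply BWG.le_foldr_max
          exact List.mem_map.2 ⟨j, hj', rfl⟩
        omega
      · -- j = n - i + 1, use window at n - i
        have hjeq : j = n - i + 1 := by omega
        have hj' : (n - i) ∈ List.range (n + 1 - i) := by
          simp only [List.mem_range]; omega
        have hdj : ((w.drop (n - i)).drop 1) = w.drop j := by
          rw [List.drop_drop]
          congr 1
          omega
        have hsp : (w.drop (n - i)).take i =
            (w.drop (n - i)).take 1 ++ ((w.drop j).take (i - 1)) := by
          rw [← hdj, ← List.take_add]
          congr 1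
          omega
        have h1 : cnt ((w.drop j).take (i - 1)) ≤ cnt ((w.drop (n - i)).take i) := by
          rw [hsp, hcnt_append]; omega
        have h2 : cnt ((w.drop (n - i)).take i) ≤ C i := by
          apply BWG.le_foldr_max
          exact List.mem_map.2 ⟨n - i, hj', rfl⟩
        omega
    -- conclude
    have h1 := hfwm i hin
    have h2 := hfwm (i - 1) (by omega)
    have hc1 := hCle (i - 1) (by omega)
    have hc2 := hCle i hin
    rcases (by omega : C i = C (i - 1) ∨ C i = C (i - 1) + 1) with hcc | hcc
    · obtain ⟨a, ha⟩ := hxa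
      refine ⟨a, ?_⟩
      rw [h1, h2, ha, hcc]
      rw [show i - C (i - 1) = (i - 1 - C (i - 1)) + 1 from by omega, pow_succ, mul_right_comm]
    · obtain ⟨b, hb⟩ := hya
      refine ⟨b, ?_⟩
      rw [h1, h2, hb, hcc]
      rw [show i - (C (i - 1) + 1) = i - 1 - C (i - 1) from by omega, pow_succ, ← mul_assoc]
  obtain ⟨x, y, hne, hset⟩ := Finset.card_eq_two.1 hbin
  rcases hne.lt_or_gt with h | h
  · exact key x y h hset
  · exact key y x h (by rw [hset, Finset.pair_comm])
end

section
/- Let μ_A and μ_B be equivalent weight measures over the same finite alphabet Σ. Then: (i) μ_A is gapfree if and only if μ_B is gapfree; (ii) μ_A is injective if and only if μ_B is injective; (iii) given a total order on Σ, μ_A is alphabetically ordered if and only if μ_B is alphabetically ordered. -/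
/-- Two weight measures over the same alphabet are equivalent if they compare words of
equal length in the same way. -/
def EquivWeightMeasures {α A B : Type*} [CommMonoid A] [LinearOrder A] [IsOrderedCancelMonoid A]
    [CommMonoid B] [LinearOrder B] [IsOrderedCancelMonoid B] (μ : α → A) (ν : α → B) : Prop :=
  ∀ v w : List α, v.length = w.length → (weight μ v < weight μ w ↔ weight ν v < weight ν w)

section Aux

variable {α A B : Type*} [CommMonoid A] [LinearOrder A] [IsOrderedCancelMonoid A] [CommMonoid B] [LinearOrder B] [IsOrderedCancelMonoid B]

lemma wm_one_le (μ : α → A) (hμ : ∀ a, 1 < μ a) (w : List α) : 1 ≤ weight μ w := by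
  unfold weight
  apply List.one_le_prod_of_one_le
  intro x hx
  obtain ⟨a, -, rfl⟩ := List.mem_map.1 hx
  exact (hμ a).le

lemma wm_le_iff {μ : α → A} {ν : α → B} (hequiv : EquivWeightMeasures μ ν)
    {v w : List α} (h : v.length = w.length) :
    weight μ v ≤ weight μ w ↔ weight ν v ≤ weight ν w := by
  rw [← not_lt, ← not_lt, hequiv w v h.symm]

lemma wm_eq_iff {μ : α → A} {ν : α → B} (hequiv : EquivWeightMeasures μ ν)
    {v w : List α} (h : v.length = w.length) :
    weight μ v = weight μ w ↔ weight ν v = weight ν w := by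
  rw [le_antisymm_iff, le_antisymm_iff, wm_le_iff hequiv h, wm_le_iff hequiv h.symm]

lemma exists_argmax {γ C : Type*} [LinearOrder C] (f : γ → C) :
    ∀ l : List γ, l ≠ [] → ∃ u ∈ l, ∀ v ∈ l, f v ≤ f u := by
  intro l
  induction l with
  | nil => simp
  | cons a t ih =>
    intro _
    rcases eq_or_ne t [] with rfl | ht
    · exact ⟨a, by simp⟩
    · obtain ⟨u, hu, hmax⟩ := ih ht
      rcases le_total (f a) (f u) with h | h
      · refine ⟨u, List.mem_cons_of_mem _ hu, ?_⟩
        intro v hv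
        rcases List.mem_cons.1 hv with rfl | hv
        · exact h
        · exact hmax v hv
      · refine ⟨a, List.mem_cons_self, ?_⟩
        intro v hv
        rcases List.mem_cons.1 hv with rfl | hv
        · exact le_rfl
        · exact (hmax v hv).trans h

lemma foldr_max_eq {γ C : Type*} [LinearOrder C] (f : γ → C) (d : C) :
    ∀ (l : List γ) (u : γ), (∀ v ∈ l, d ≤ f v) → u ∈ l → (∀ v ∈ l, f v ≤ f u) →
      (l.map f).foldr max d = f u := by
  intro l
  induction l with
  | nil => simp
  | cons a t ih =>
    intro u hd hu hmax
    rcases eq_or_ne t [] with rfl | ht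
    · simp only [List.mem_singleton] at hu
      subst hu
      simpa using max_eq_left (hd u (by simp))
    · obtain ⟨u', hu', hmax'⟩ := exists_argmax f t ht
      have hfold : (t.map f).foldr max d = f u' :=
        ih u' (fun v hv => hd v (List.mem_cons_of_mem _ hv)) hu' hmax'
      have : ((a :: t).map f).foldr max d = max (f a) (f u') := by
        simp [hfold]
      rw [this]
      rcases List.mem_cons.1 hu with rfl | hu
      · exact max_eq_left (hmax u' (List.mem_cons_of_mem _ hu'))
      · have h1 : f u' = f u := le_antisymm (hmax u' (List.mem_cons_of_mem _ hu')) (hmax' u hu)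
        rw [h1]
        exact max_eq_right (hmax a List.mem_cons_self)

lemma exists_common_factor (μ : α → A) (ν : α → B) (hμ : ∀ a, 1 < μ a)
    (hν : ∀ a, 1 < ν a) (hequiv : EquivWeightMeasures μ ν) (w : List α) (i : ℕ)
    (hi : i ≤ w.length) :
    ∃ u : List α, u.length = i ∧ weight μ u = factorWeight μ w i ∧
      weight ν u = factorWeight ν w i := by
  set L := (List.range (w.length + 1 - i)).map (fun j => (w.drop j).take i) with hLdef
  have hL : L ≠ [] := by
    have : L.length = w.length + 1 - i := by simp [hLdef]
    intro h
    rw [h] at this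
    simp at this
    omega
  have hlen : ∀ v ∈ L, v.length = i := by
    intro v hv
    rw [hLdef, List.mem_map] at hv
    obtain ⟨j, hj, rfl⟩ := hv
    rw [List.mem_range] at hj
    rw [List.length_take, List.length_drop]
    omega
  obtain ⟨u, hu, hmax⟩ := exists_argmax (weight μ) L hL
  have hmaxν : ∀ v ∈ L, weight ν v ≤ weight ν u := fun v hv =>
    (wm_le_iff hequiv ((hlen v hv).trans (hlen u hu).symm)).1 (hmax v hv)
  have hfw_μ : factorWeight μ w i = (L.map (weight μ)).foldr max 1 := by
    rw [hLdef, List.map_map]; rfl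
  have hfw_ν : factorWeight ν w i = (L.map (weight ν)).foldr max 1 := by
    rw [hLdef, List.map_map]; rfl
  refine ⟨u, hlen u hu, ?_, ?_⟩
  · rw [hfw_μ, foldr_max_eq (weight μ) 1 L u (fun v _ => wm_one_le μ hμ v) hu hmax]
  · rw [hfw_ν, foldr_max_eq (weight ν) 1 L u (fun v _ => wm_one_le ν hν v) hu hmaxν]

lemma gapfree_of (μ : α → A) (ν : α → B) (hμ : ∀ a, 1 < μ a) (hν : ∀ a, 1 < ν a)
    (hequiv : EquivWeightMeasures μ ν) (hg : Gapfree μ) : Gapfree ν := by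
  intro w i hi hil
  obtain ⟨u, hul, huμ, huν⟩ := exists_common_factor μ ν hμ hν hequiv w i hil
  obtain ⟨u', hul', huμ', huν'⟩ := exists_common_factor μ ν hμ hν hequiv w (i - 1) (by omega)
  obtain ⟨a, ha⟩ := hg w i hi hil
  have h1 : weight μ u = weight μ (u' ++ [a]) := by
    rw [huμ, ha, ← huμ']
    simp [weight]
  have hlen : u.length = (u' ++ [a]).length := by
    simp [hul, hul']
    omega
  have h2 : weight ν u = weight ν (u' ++ [a]) := (wm_eq_iff hequiv hlen).1 h1
  refine ⟨a, ?_⟩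
  rw [← huν, h2, ← huν']
  simp [weight]

end Aux

/-- For equivalent weight measures `μ` and `ν`: (i) `μ` is gapfree iff `ν` is gapfree;
(ii) `μ` is injective iff `ν` is injective; (iii) given a total order on the alphabet,
`μ` is alphabetically ordered iff `ν` is alphabetically ordered. -/
theorem equiv_weightMeasures_preserve_properties {α A B : Type*} [Fintype α]
    [LinearOrder α] [CommMonoid A] [LinearOrder A] [IsOrderedCancelMonoid A] [CommMonoid B] [LinearOrder B] [IsOrderedCancelMonoid B]
    (μ : α → A) (ν : α → B) (hμ : ∀ a : α, 1 < μ a) (hν : ∀ a : α, 1 < ν a)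
    (hequiv : EquivWeightMeasures μ ν) :
    (Gapfree μ ↔ Gapfree ν) ∧
    (Function.Injective μ ↔ Function.Injective ν) ∧
    ((∀ a b : α, a ≤ b → μ a ≤ μ b) ↔ (∀ a b : α, a ≤ b → ν a ≤ ν b)) := by
  have hequiv' : EquivWeightMeasures ν μ := fun v w h => (hequiv v w h).symm
  have keyeq : ∀ a b : α, μ a = μ b ↔ ν a = ν b := by
    intro a b
    have := wm_eq_iff hequiv (v := [a]) (w := [b]) rfl
    simpa [weight] using this
  have keyle : ∀ a b : α, μ a ≤ μ b ↔ ν a ≤ ν b := by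
    intro a b
    have := wm_le_iff hequiv (v := [a]) (w := [b]) rfl
    simpa [weight] using this
  refine ⟨⟨gapfree_of μ ν hμ hν hequiv, gapfree_of ν μ hν hμ hequiv'⟩, ?_, ?_⟩
  · constructor
    · intro h a b hab
      exact h ((keyeq a b).2 hab)
    · intro h a b hab
      exact h ((keyeq a b).1 hab)
  · constructor
    · intro h a b hab
      exact (keyle a b).1 (h a b hab)
    · intro h a b hab
      exact (keyle a b).2 (h a b hab)
end

section
/- Let Σ = {a_1 < a_2 < … < a_n} with n > 2 be a strictly totally ordered finite alphabet and let μ be an injective, alphabetically ordered weight measure over Σ with values in a linearly ordered cancellative commutative monoid A. If μ has no gap over any word of the form c·a·c·b where a < b < c are letters of Σ, then μ(a_i)·μ(a_{i+x}) = μ(a_{i+y})·μ(a_{i+x−y}) holds for all i, x, y ∈ ℕ with y < x and i + x ≤ n. -/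
lemma fw3 {α A : Type*} [CommMonoid A] [LinearOrder A] [IsOrderedCancelMonoid A] (μ : α → A) (a b c : α)
    (h1 : 1 < μ a) (hab : μ a < μ b) (hbc : μ b < μ c) :
    factorWeight μ [c, a, c, b] 3 = μ c * (μ a * μ c) := by
  have h1c : 1 < μ c := h1.trans (hab.trans hbc)
  simp [factorWeight, weight, List.range_succ]
  constructor
  · calc μ a * (μ c * μ b) ≤ μ a * (μ c * μ c) :=
          mul_le_mul_right (mul_le_mul_right hbc.le _) _
      _ = μ c * (μ a * μ c) := mul_left_comm _ _ _
  · exact le_trans h1c.le (le_mul_of_one_le_right'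
      (le_trans h1.le (le_mul_of_one_le_right' h1c.le)))

lemma fw2 {α A : Type*} [CommMonoid A] [LinearOrder A] [IsOrderedCancelMonoid A] (μ : α → A) (a b c : α)
    (h1 : 1 < μ a) (hab : μ a < μ b) (hbc : μ b < μ c) :
    factorWeight μ [c, a, c, b] 2 = μ c * μ b := by
  have h1c : 1 < μ c := h1.trans (hab.trans hbc)
  simp [factorWeight, weight, List.range_succ]
  have e1 : μ c * μ b ⊔ 1 = μ c * μ b :=
    sup_eq_left.mpr (le_trans h1c.le (le_mul_of_one_le_right' (h1.trans hab).le))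
  have e2 : μ a * μ c ⊔ (μ c * μ b) = μ c * μ b := by
    rw [mul_comm (μ a)]; exact sup_eq_right.mpr (mul_le_mul_right hab.le _)
  have e3 : μ c * μ a ⊔ (μ c * μ b) = μ c * μ b :=
    sup_eq_right.mpr (mul_le_mul_right hab.le _)
  rw [e1, e2, e3]


/-- If an injective, alphabetically ordered weight measure over a strictly totally
ordered alphabet `{a_1 < … < a_n}` (modelled as `Fin n`, 0-indexed) with `n > 2` has no
gap over any word of the form `c·a·c·b` with `a < b < c`, then
`μ(a_i) * μ(a_{i+x}) = μ(a_{i+y}) * μ(a_{i+x-y})` for all `y < x` with `i + x ≤ n`. -/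
theorem mul_eq_of_no_gap_cacb {n : ℕ} (hn : 2 < n) {A : Type*}
    [CommMonoid A] [LinearOrder A] [IsOrderedCancelMonoid A] (μ : Fin n → A) (hμ : ∀ a, 1 < μ a)
    (hinj : Function.Injective μ) (hmono : Monotone μ)
    (hnogap : ∀ a b c : Fin n, a < b → b < c →
      ∀ i, 1 ≤ i → i ≤ 4 →
        ∃ x : Fin n, factorWeight μ [c, a, c, b] i
          = factorWeight μ [c, a, c, b] (i - 1) * μ x) :
    ∀ (i x y : ℕ), ∀ (hyx : y < x) (h : i + x < n),
      μ ⟨i, by omega⟩ * μ ⟨i + x, h⟩ = μ ⟨i + y, by omega⟩ * μ ⟨i + x - y, by omega⟩ := by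
  have hsm : StrictMono μ := hmono.strictMono_of_injective hinj
  have feμ : ∀ (p q : ℕ) (hp : p < n) (hq : q < n), p = q →
      μ ⟨p, hp⟩ = μ ⟨q, hq⟩ := by
    intro p q hp hq h; subst h; rfl
  -- Step lemma: μ(j) μ(j+2) = μ(j+1)²
  have step : ∀ j (hj : j + 2 < n),
      μ ⟨j, by omega⟩ * μ ⟨j + 2, hj⟩ = μ ⟨j + 1, by omega⟩ * μ ⟨j + 1, by omega⟩ := by
    intro j hj
    set a : Fin n := ⟨j, by omega⟩ with ha
    set b : Fin n := ⟨j + 1, by omega⟩ with hb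
    set c : Fin n := ⟨j + 2, hj⟩ with hc
    have hab : a < b := by simp [ha, hb, Fin.mk_lt_mk]
    have hbc : b < c := by simp [hb, hc, Fin.mk_lt_mk]
    obtain ⟨x, hx⟩ := hnogap a b c hab hbc 3 (by norm_num) (by norm_num)
    rw [show (3 : ℕ) - 1 = 2 from rfl, fw3 μ a b c (hμ a) (hsm hab) (hsm hbc),
        fw2 μ a b c (hμ a) (hsm hab) (hsm hbc)] at hx
    have key : μ a * μ c = μ b * μ x := by
      apply mul_left_cancel (a := μ c)
      rw [hx, mul_assoc]
    have hxb : x = b := by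
      rcases lt_trichotomy x b with h | h | h
      · exfalso
        have hxa : μ x ≤ μ a := by
          apply hmono
          have h' : x.val < j + 1 := by simpa [hb, Fin.lt_def] using h
          exact Fin.le_def.mpr (by simp [ha]; omega)
        have hlt : μ b * μ x < μ a * μ c :=
          calc μ b * μ x ≤ μ b * μ a := mul_le_mul_right hxa _
            _ = μ a * μ b := mul_comm _ _
            _ < μ a * μ c := mul_lt_mul_right (hsm hbc) _
        rw [key] at hlt; exact lt_irrefl _ hlt
      · exact h
      · exfalso
        have hcx : μ c ≤ μ x := by
          apply hmono
          have h' : j + 1 < x.val := by simpa [hb, Fin.lt_def] using h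
          exact Fin.le_def.mpr (by simp [hc]; omega)
        have hlt : μ a * μ c < μ b * μ x :=
          calc μ a * μ c < μ b * μ c := mul_lt_mul_left (hsm hab) _
            _ ≤ μ b * μ x := mul_le_mul_right hcx _
        rw [key] at hlt; exact lt_irrefl _ hlt
    rw [hxb] at key
    exact key
  -- Shift-by-one lemma
  have P : ∀ d i (hd : 1 ≤ d) (h : i + d < n),
      μ ⟨i, by omega⟩ * μ ⟨i + d, h⟩ = μ ⟨i + 1, by omega⟩ * μ ⟨i + d - 1, by omega⟩ := by
    intro d
    induction d with
    | zero => intro i hd; omega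
    | succ d ih =>
      intro i hd h
      by_cases hd0 : d = 0
      · subst hd0
        exact mul_comm (μ ⟨i, by omega⟩) (μ ⟨i + 1, by omega⟩)
      · have hd' : 1 ≤ d := by omega
        have h' : i + d < n := by omega
        apply mul_right_cancel (b := μ ⟨i + d - 1, by omega⟩)
        have hs := step (i + d - 1) (by omega)
        have hs' : μ ⟨i + d - 1, by omega⟩ * μ ⟨i + d + 1, by omega⟩
            = μ ⟨i + d, by omega⟩ * μ ⟨i + d, by omega⟩ := by
          rw [feμ (i + d - 1 + 2) (i + d + 1) (by omega) (by omega) (by omega)] at hs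
          rw [feμ (i + d - 1 + 1) (i + d) (by omega) (by omega) (by omega)] at hs
          exact hs
        calc μ ⟨i, by omega⟩ * μ ⟨i + (d + 1), by omega⟩ * μ ⟨i + d - 1, by omega⟩
            = μ ⟨i, by omega⟩ * (μ ⟨i + d - 1, by omega⟩ * μ ⟨i + d + 1, by omega⟩) := by
              rw [feμ (i + (d + 1)) (i + d + 1) (by omega) (by omega) (by omega)]
              rw [mul_right_comm, mul_assoc]
          _ = μ ⟨i, by omega⟩ * (μ ⟨i + d, by omega⟩ * μ ⟨i + d, by omega⟩) := by rw [hs']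
          _ = (μ ⟨i, by omega⟩ * μ ⟨i + d, by omega⟩) * μ ⟨i + d, by omega⟩ := by
              rw [mul_assoc]
          _ = (μ ⟨i + 1, by omega⟩ * μ ⟨i + d - 1, by omega⟩) * μ ⟨i + d, by omega⟩ := by
              rw [ih i hd' h']
          _ = μ ⟨i + 1, by omega⟩ * μ ⟨i + (d + 1) - 1, by omega⟩ * μ ⟨i + d - 1, by omega⟩ := by
              rw [feμ (i + (d + 1) - 1) (i + d) (by omega) (by omega) (by omega),
                mul_right_comm]
  -- General shift for 2y ≤ x
  have Q : ∀ y i x (hy : 2 * y ≤ x) (h : i + x < n),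
      μ ⟨i, by omega⟩ * μ ⟨i + x, h⟩ = μ ⟨i + y, by omega⟩ * μ ⟨i + x - y, by omega⟩ := by
    intro y
    induction y with
    | zero =>
      intro i x hy h
      exact congrArg (μ ⟨i, by omega⟩ * μ ·) (Fin.ext (by omega : i + x = i + x - 0))
    | succ y ih =>
      intro i x hy h
      have hx2 : 2 ≤ x := by omega
      calc μ ⟨i, by omega⟩ * μ ⟨i + x, h⟩
          = μ ⟨i + 1, by omega⟩ * μ ⟨i + x - 1, by omega⟩ := P x i (by omega) h
        _ = μ ⟨i + 1, by omega⟩ * μ ⟨i + 1 + (x - 2), by omega⟩ := by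
            rw [feμ (i + x - 1) (i + 1 + (x - 2)) (by omega) (by omega) (by omega)]
        _ = μ ⟨i + 1 + y, by omega⟩ * μ ⟨i + 1 + (x - 2) - y, by omega⟩ :=
            ih (i + 1) (x - 2) (by omega) (by omega)
        _ = μ ⟨i + (y + 1), by omega⟩ * μ ⟨i + x - (y + 1), by omega⟩ := by
            rw [feμ (i + 1 + y) (i + (y + 1)) (by omega) (by omega) (by omega),
              feμ (i + 1 + (x - 2) - y) (i + x - (y + 1)) (by omega) (by omega) (by omega)]
  -- Conclusion
  intro i x y hyx h
  rcases le_or_gt (2 * y) x with hc | hc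
  · exact Q y i x hc h
  · have h1 := Q (x - y) i x (by omega) h
    calc μ ⟨i, by omega⟩ * μ ⟨i + x, h⟩
        = μ ⟨i + (x - y), by omega⟩ * μ ⟨i + x - (x - y), by omega⟩ := h1
      _ = μ ⟨i + y, by omega⟩ * μ ⟨i + x - y, by omega⟩ := by
          rw [feμ (i + x - (x - y)) (i + y) (by omega) (by omega) (by omega),
            feμ (i + (x - y)) (i + x - y) (by omega) (by omega) (by omega), mul_comm]
end

section
/- Every non-binary prime weight measure is gapful: if μ is a weight measure over a finite alphabet Σ with values in (ℕ,·) such that every base weight μ(a) is a prime number and |μ(Σ)| > 2, then μ is not gapfree. -/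
lemma aux_not_gapfree {α : Type*} (μ : α → ℕ+) (hprime : ∀ a : α, (μ a : ℕ).Prime)
    (a b c : α) (hpq : μ a < μ b) (hqr : μ b < μ c) : ¬ Gapfree μ := by
  intro hg
  obtain ⟨x, hx⟩ := hg [b, c, a, c] 3 (by norm_num) (by norm_num)
  have hpq' : (μ a : ℕ) < (μ b : ℕ) := hpq
  have hqr' : (μ b : ℕ) < (μ c : ℕ) := hqr
  have h2 : factorWeight μ [b, c, a, c] 2 = μ b * μ c := by
    simp only [factorWeight, weight]
    simp [List.range_succ]
    constructor <;> (rw [← PNat.coe_le_coe]; push_cast; nlinarith)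
  have h3 : factorWeight μ [b, c, a, c] 3 = μ c * (μ a * μ c) := by
    simp only [factorWeight, weight]
    simp [List.range_succ]
    rw [← PNat.coe_le_coe]; push_cast
    nlinarith [mul_lt_mul_of_pos_left hqr' (mul_pos (μ a).pos (μ c).pos)]
  rw [h2, h3] at hx
  have hx' : (μ c : ℕ) * ((μ a : ℕ) * (μ c : ℕ)) = (μ b : ℕ) * (μ c : ℕ) * (μ x : ℕ) := by
    exact_mod_cast congrArg (PNat.val) hx
  have hdvd : (μ b : ℕ) ∣ (μ c : ℕ) * ((μ a : ℕ) * (μ c : ℕ)) := ⟨(μ c : ℕ) * (μ x : ℕ), by linarith [hx']⟩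
  rcases (hprime b).dvd_mul.mp hdvd with h | h
  · exact absurd ((Nat.prime_dvd_prime_iff_eq (hprime b) (hprime c)).mp h) (by omega)
  · rcases (hprime b).dvd_mul.mp h with h' | h'
    · exact absurd ((Nat.prime_dvd_prime_iff_eq (hprime b) (hprime a)).mp h') (by omega)
    · exact absurd ((Nat.prime_dvd_prime_iff_eq (hprime b) (hprime c)).mp h') (by omega)

/-- Every non-binary prime weight measure is gapful: if all base weights of
`μ : Σ → ℕ+` are prime and `|μ(Σ)| > 2`, then `μ` is not gapfree. -/
theorem prime_weightMeasure_not_gapfree {α : Type*} [Fintype α] [DecidableEq α]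
    (μ : α → ℕ+) (hprime : ∀ a : α, (μ a : ℕ).Prime)
    (hnonbin : 2 < (Finset.univ.image μ).card) :
    ¬ Gapfree μ := by
  obtain ⟨u, v, w, hu, hv, hw, huv, huw, hvw⟩ := Finset.two_lt_card_iff.mp hnonbin
  obtain ⟨a, -, rfl⟩ := Finset.mem_image.mp hu
  obtain ⟨b, -, rfl⟩ := Finset.mem_image.mp hv
  obtain ⟨c, -, rfl⟩ := Finset.mem_image.mp hw
  rcases huv.lt_or_gt with h1 | h1 <;> rcases huw.lt_or_gt with h2 | h2 <;>
    rcases hvw.lt_or_gt with h3 | h3 <;>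
    first
      | exact aux_not_gapfree μ hprime a b c h1 h3
      | exact aux_not_gapfree μ hprime a c b h2 h3
      | exact aux_not_gapfree μ hprime b a c h1 h2
      | exact aux_not_gapfree μ hprime b c a h3 h2
      | exact aux_not_gapfree μ hprime c a b h2 h1
      | exact aux_not_gapfree μ hprime c b a h3 h1
end
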